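/- arXiv:1612.03754 — 4 statements merged into one kernel-verified Lean document; each statement's English description precedes it below -/
import Mathlib

section
/- Let G be a commutative group, let h_1, …, h_s ∈ G generate G as a group, and let n_1, …, n_s be nonnegative integers. If f : G → ℂ satisfies Δ_{h_k}^{n_k + 1} f = 0 for every k = 1, …, s, then f is a polynomial of degree at most n_1 + ⋯ + n_s, i.e. Δ_{g_{N+1}} Δ_{g_N} ⋯ Δ_{g_1} f = 0 for all g_1, …, g_{N+1} ∈ G, where N = n_1 + ⋯ + n_s. -/
noncomputable section

/-- Forward difference operator: `Δ_h f x = f (x + h) - f x`. -/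
def fwdDiffOp {G M : Type*} [AddCommGroup G] [AddCommGroup M] (h : G) (f : G → M) : G → M :=
  fun x => f (x + h) - f x

/-- Mixed differences along a list of steps; the head of the list is applied outermost,
so `mixedDiff [g_m, …, g_1] f = Δ_{g_m} ⋯ Δ_{g_1} f`. -/
def mixedDiff {G M : Type*} [AddCommGroup G] [AddCommGroup M] : List G → (G → M) → (G → M)
  | [], f => f
  | h :: t, f => fwdDiffOp h (mixedDiff t f)

/-- Translation operator: `τ_h f x = f (x + h)`. -/
def transOp {G M : Type*} [AddCommGroup G] (h : G) (f : G → M) : G → M :=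
  fun x => f (x + h)

/-- The span of all translates of `g`. -/
def tauSpan {G : Type*} [AddCommGroup G] (g : G → ℂ) : Submodule ℂ (G → ℂ) :=
  Submodule.span ℂ (Set.range fun h : G => transOp h g)

/-- `f` is an exponential polynomial iff the span of its translates is finite dimensional. -/
def IsExpPoly {G : Type*} [AddCommGroup G] (f : G → ℂ) : Prop :=
  FiniteDimensional ℂ (tauSpan f)

namespace MontelAux

open Pointwise

variable {G : Type*} [AddCommGroup G]

/-- Translation as a linear endomorphism. -/
def transLM (a : G) : Module.End ℂ (G → ℂ) where
  toFun f := fun x => f (x + a)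
  map_add' _ _ := rfl
  map_smul' _ _ := rfl

/-- Translations as a monoid hom from `Multiplicative G` to endomorphisms. -/
def tauHom : Multiplicative G →* Module.End ℂ (G → ℂ) where
  toFun a := transLM (Multiplicative.toAdd a)
  map_one' := by ext f x; simp [transLM]
  map_mul' a b := by ext f x; simp [transLM, Module.End.mul_apply, add_assoc]

/-- The action of the group algebra on functions by translations. -/
def phi : AddMonoidAlgebra ℂ G →ₐ[ℂ] Module.End ℂ (G → ℂ) :=
  AddMonoidAlgebra.lift ℂ _ G tauHom

/-- `X a` is the group-algebra element corresponding to translation by `a`. -/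
def X (a : G) : AddMonoidAlgebra ℂ G := AddMonoidAlgebra.single a 1

/-- `D a = X a - 1` corresponds to the difference operator `Δ_a`. -/
def D (a : G) : AddMonoidAlgebra ℂ G := X a - 1

lemma phi_X (a : G) : phi (X a) = transLM a := by
  simp [phi, X, AddMonoidAlgebra.lift_single, tauHom]

lemma phi_D (a : G) (f : G → ℂ) : phi (D a) f = fwdDiffOp a f := by
  have : phi (D a) = transLM a - 1 := by
    rw [D, map_sub, map_one, phi_X]
  rw [this]
  rfl

lemma X_mul (a b : G) : X a * X b = X (a + b) := by
  simp [X, AddMonoidAlgebra.single_mul_single]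

lemma X_zero : X (0 : G) = 1 := rfl

/-- Every `D g` lies in the ideal generated by the `D (h k)`. -/
lemma D_mem_span {s : ℕ} (h : Fin s → G)
    (hgen : AddSubgroup.closure (Set.range h) = ⊤) (g : G) :
    D g ∈ Ideal.span (Set.range fun k => D (h k)) := by
  set J := Ideal.span (Set.range fun k => D (h k)) with hJ
  let S : AddSubgroup G :=
    { carrier := {g | D g ∈ J}
      zero_mem' := by
        show D (0 : G) ∈ J
        have : D (0 : G) = 0 := by rw [D, X_zero, sub_self]
        rw [this]; exact J.zero_mem
      add_mem' := by
        intro a b ha hb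
        show D (a + b) ∈ J
        have key : D (a + b) = D a * X b + D b := by
          rw [D, D, D, sub_mul, one_mul, X_mul]; ring
        rw [key]
        exact J.add_mem (Ideal.mul_mem_right _ _ ha) hb
      neg_mem' := by
        intro a ha
        show D (-a) ∈ J
        have key : D (-a) = -(X (-a) * D a) := by
          rw [D, D, mul_sub, mul_one, X_mul, neg_add_cancel, X_zero]; ring
        rw [key]
        exact J.neg_mem (Ideal.mul_mem_left _ _ ha) }
  have hle : AddSubgroup.closure (Set.range h) ≤ S := by
    rw [AddSubgroup.closure_le]
    rintro x ⟨k, rfl⟩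
    exact Ideal.subset_span ⟨k, rfl⟩
  have : g ∈ S := hle (hgen ▸ AddSubgroup.mem_top g)
  exact this

/-- Mixed differences are given by the group-algebra action. -/
lemma mixedDiff_eq (L : List G) (f : G → ℂ) :
    mixedDiff L f = phi ((L.map D).prod) f := by
  induction L with
  | nil => simp [mixedDiff]
  | cons a t ih =>
      show fwdDiffOp a (mixedDiff t f) = _
      rw [ih, ← phi_D, List.map_cons, List.prod_cons, map_mul]
      rfl

lemma list_prod_mem_pow (J : Ideal (AddMonoidAlgebra ℂ G)) :
    ∀ L : List (AddMonoidAlgebra ℂ G), (∀ x ∈ L, x ∈ J) → L.prod ∈ J ^ L.length := by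
  intro L
  induction L with
  | nil => intro _; simp [Ideal.one_eq_top]
  | cons a t ih =>
      intro hmem
      rw [List.prod_cons, List.length_cons, pow_succ']
      exact Ideal.mul_mem_mul (hmem a (List.mem_cons_self (a := a) (l := t)))
        (ih fun x hx => hmem x (List.mem_cons_of_mem a hx))

lemma span_pow (s : Set (AddMonoidAlgebra ℂ G)) (m : ℕ) :
    Ideal.span s ^ m = Ideal.span (s ^ m) := by
  induction m with
  | zero => rw [pow_zero, pow_zero, Ideal.span_one, Ideal.one_eq_top]
  | succ m ih => rw [pow_succ', ih, Ideal.span_mul_span', ← pow_succ']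

end MontelAux

open MontelAux in
/-- **Montel-type theorem, unmixed differences (Theorem 1, algebraic part).**
If `h 1, …, h s` generate the commutative group `G` and `Δ_{h k}^{n k + 1} f = 0` for each `k`,
then `f` is a polynomial of degree at most `N = n 1 + ⋯ + n s`, i.e.
`Δ_{g_{N+1}} ⋯ Δ_{g_1} f = 0` for all `g_1, …, g_{N+1} ∈ G`. -/
theorem montel_unmixed {G : Type*} [AddCommGroup G] {s : ℕ}
    (h : Fin s → G) (n : Fin s → ℕ)
    (hgen : AddSubgroup.closure (Set.range h) = ⊤)
    (f : G → ℂ)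
    (hf : ∀ k : Fin s, (fwdDiffOp (h k))^[n k + 1] f = 0) :
    ∀ g : Fin ((∑ k, n k) + 1) → G, mixedDiff (List.ofFn g).reverse f = 0 := by
  classical
  intro g
  have hN : (∑ k, n k) = ∑ k, n k := rfl
  -- the annihilator ideal of `f`
  let I : Ideal (AddMonoidAlgebra ℂ G) :=
    { carrier := {a | phi a f = 0}
      zero_mem' := by simp
      add_mem' := by
        intro a b ha hb
        show phi (a + b) f = 0
        rw [map_add, LinearMap.add_apply, ha, hb, add_zero]
      smul_mem' := by
        intro r a ha
        show phi (r • a) f = 0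
        rw [smul_eq_mul, map_mul, Module.End.mul_apply, ha, map_zero] }
  -- powers of the generating differences annihilate `f`
  have hpow : ∀ k : Fin s, D (h k) ^ (n k + 1) ∈ I := by
    intro k
    show phi (D (h k) ^ (n k + 1)) f = 0
    rw [map_pow, Module.End.pow_apply]
    have hc : ⇑(phi (D (h k))) = fwdDiffOp (h k) := funext fun f' => phi_D (h k) f'
    rw [hc]
    exact hf k
  have hIk : ∀ (k : Fin s) (m : ℕ), n k + 1 ≤ m → D (h k) ^ m ∈ I := by
    intro k m hm
    have : D (h k) ^ m = D (h k) ^ (m - (n k + 1)) * D (h k) ^ (n k + 1) := by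
      rw [← pow_add, Nat.sub_add_cancel hm]
    rw [this]
    exact Ideal.mul_mem_left _ _ (hpow k)
  -- the span ideal
  set J : Ideal (AddMonoidAlgebra ℂ G) :=
    Ideal.span (Set.range fun k => D (h k)) with hJ
  -- key: J ^ ((∑ k, n k) + 1) ≤ I
  have hkey : J ^ ((∑ k, n k) + 1) ≤ I := by
    rw [hJ, span_pow, Ideal.span_le]
    intro x hx
    rw [Set.mem_pow] at hx
    obtain ⟨t, ht⟩ := hx
    -- each t i is D (h (c i)) for some c i
    have hc : ∀ i : Fin ((∑ k, n k) + 1), ∃ k : Fin s, D (h k) = (t i : AddMonoidAlgebra ℂ G) :=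
      fun i => (t i).2
    choose c hcc using hc
    have hxp : x = ∏ k : Fin s, D (h k) ^ (Finset.univ.filter (fun i => c i = k)).card := by
      rw [← ht, List.prod_ofFn]
      have h1 : ∀ i : Fin ((∑ k, n k) + 1), (t i : AddMonoidAlgebra ℂ G) = D (h (c i)) :=
        fun i => (hcc i).symm
      calc (∏ i : Fin ((∑ k, n k) + 1), (t i : AddMonoidAlgebra ℂ G))
          = ∏ i : Fin ((∑ k, n k) + 1), D (h (c i)) := Finset.prod_congr rfl fun i _ => h1 i
        _ = ∏ k : Fin s, ∏ i ∈ Finset.univ.filter (fun i => c i = k), D (h k) :=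
            (Finset.prod_fiberwise_of_maps_to' (fun i _ => Finset.mem_univ (c i))
              (fun k => D (h k))).symm
        _ = _ := by
            refine Finset.prod_congr rfl fun k _ => ?_
            rw [Finset.prod_const]
    -- pigeonhole
    have hsum : ∑ k : Fin s, (Finset.univ.filter (fun i => c i = k)).card = (∑ k, n k) + 1 := by
      rw [← Finset.card_eq_sum_card_fiberwise
        (fun i (_ : i ∈ Finset.univ) => Finset.mem_univ (c i))]
      simp
    have hlt : ∑ k : Fin s, n k < ∑ k : Fin s, (Finset.univ.filter (fun i => c i = k)).card := by
      rw [hsum]; omega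
    obtain ⟨k, -, hk⟩ := Finset.exists_lt_of_sum_lt hlt
    -- extract the big factor
    show x ∈ I
    rw [hxp, ← Finset.mul_prod_erase Finset.univ _ (Finset.mem_univ k)]
    exact Ideal.mul_mem_right _ _ (hIk k _ hk)
  -- conclude
  have hDg : ∀ i : Fin ((∑ k, n k) + 1), D (g i) ∈ J := fun i => D_mem_span h hgen (g i)
  have hmem : ((List.ofFn g).reverse.map D).prod ∈ J ^ ((∑ k, n k) + 1) := by
    have hlen : ((List.ofFn g).reverse.map D).length = (∑ k, n k) + 1 := by
      simp
    have hm := list_prod_mem_pow J ((List.ofFn g).reverse.map D) ?_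
    · rwa [hlen] at hm
    · intro x hx
      rw [List.mem_map] at hx
      obtain ⟨a, ha, rfl⟩ := hx
      rw [List.mem_reverse, List.mem_ofFn] at ha
      obtain ⟨i, rfl⟩ := ha
      exact hDg i
  have : phi (((List.ofFn g).reverse.map D).prod) f = 0 := hkey hmem
  rw [mixedDiff_eq, this]
end
end

section
/- Let G be a commutative topological group, let h_1, …, h_s ∈ G topologically generate G (the closure of the subgroup generated by {h_1, …, h_s} is all of G), and let n_1, …, n_s be nonnegative integers. If f : G → ℂ is continuous and satisfies Δ_{h_k}^{n_k + 1} f = 0 for every k = 1, …, s, then f is a polynomial of degree at most n_1 + ⋯ + n_s, i.e. Δ_{g_{N+1}} Δ_{g_N} ⋯ Δ_{g_1} f = 0 for all g_1, …, g_{N+1} ∈ G, where N = n_1 + ⋯ + n_s. -/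
noncomputable section

section MontelAux

variable {G : Type*} [AddCommGroup G]

lemma fwdDiffOp_add_fn (a : G) (F₁ F₂ : G → ℂ) :
    fwdDiffOp a (F₁ + F₂) = fwdDiffOp a F₁ + fwdDiffOp a F₂ := by
  funext x; simp [fwdDiffOp]; ring

lemma fwdDiffOp_smul (a : G) (c : ℂ) (F : G → ℂ) :
    fwdDiffOp a (c • F) = c • fwdDiffOp a F := by
  funext x; simp [fwdDiffOp]; ring

lemma fwdDiffOp_zero_fn (a : G) : fwdDiffOp a (0 : G → ℂ) = 0 := by
  funext x; simp [fwdDiffOp]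

lemma fwdDiffOp_comm (a b : G) (F : G → ℂ) :
    fwdDiffOp a (fwdDiffOp b F) = fwdDiffOp b (fwdDiffOp a F) := by
  funext x; simp [fwdDiffOp, add_comm, add_assoc, add_left_comm]; ring

lemma transOp_transOp (a b : G) (F : G → ℂ) :
    transOp a (transOp b F) = transOp (a + b) F := by
  funext x; simp [transOp, add_assoc]

lemma transOp_zero (F : G → ℂ) : transOp (0 : G) F = F := by
  funext x; simp [transOp]

lemma fwdDiffOp_trans (a b : G) (F : G → ℂ) :
    fwdDiffOp a (transOp b F) = transOp b (fwdDiffOp a F) := by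
  funext x; simp [fwdDiffOp, transOp, add_right_comm]

lemma fwdDiffOp_add_pt (a b : G) (F : G → ℂ) :
    fwdDiffOp (a + b) F = transOp b (fwdDiffOp a F) + fwdDiffOp b F := by
  funext x; simp [fwdDiffOp, transOp, add_assoc, add_comm b a]

lemma fwdDiffOp_neg_pt (a : G) (F : G → ℂ) :
    fwdDiffOp (-a) F = -(transOp (-a) (fwdDiffOp a F)) := by
  funext x; simp [fwdDiffOp, transOp]

lemma fwdDiffOp_zero_pt (F : G → ℂ) : fwdDiffOp (0 : G) F = 0 := by
  funext x; simp [fwdDiffOp]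

lemma mixedDiff_append (l₁ l₂ : List G) (F : G → ℂ) :
    mixedDiff (l₁ ++ l₂) F = mixedDiff l₁ (mixedDiff l₂ F) := by
  induction l₁ with
  | nil => rfl
  | cons a t ih => simp [mixedDiff, ih]

lemma mixedDiff_zero (l : List G) : mixedDiff l (0 : G → ℂ) = 0 := by
  induction l with
  | nil => rfl
  | cons a t ih => simp [mixedDiff, ih, fwdDiffOp_zero_fn]

lemma mixedDiff_perm {l l' : List G} (hp : l.Perm l') (F : G → ℂ) :
    mixedDiff l F = mixedDiff l' F := by
  induction hp with
  | nil => rfl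
  | cons a _ ih => simp [mixedDiff, ih]
  | swap a b t => simp [mixedDiff, fwdDiffOp_comm]
  | trans _ _ ih1 ih2 => rw [ih1, ih2]

lemma mixedDiff_replicate (m : ℕ) (a : G) (F : G → ℂ) :
    mixedDiff (List.replicate m a) F = (fwdDiffOp a)^[m] F := by
  induction m with
  | zero => rfl
  | succ k ih => simp [List.replicate_succ, mixedDiff, ih, Function.iterate_succ_apply']

/-- translation as a linear map -/
def transLM (a : G) : (G → ℂ) →ₗ[ℂ] (G → ℂ) where
  toFun := transOp a
  map_add' _ _ := rfl
  map_smul' _ _ := rfl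

/-- forward difference as a linear map -/
def diffLM (a : G) : (G → ℂ) →ₗ[ℂ] (G → ℂ) where
  toFun := fwdDiffOp a
  map_add' := fwdDiffOp_add_fn a
  map_smul' := fun c F => fwdDiffOp_smul a c F

lemma montel_sum_count {s : ℕ} (l : List (Fin s)) : ∑ k, l.count k = l.length := by
  induction l with
  | nil => simp
  | cons a t ih =>
    simp only [List.count_cons, List.length_cons, Finset.sum_add_distrib, ih]
    simp [Finset.sum_ite_eq, beq_iff_eq]

lemma montel_pigeonhole {s : ℕ} (n : Fin s → ℕ) (l : List (Fin s))
    (hl : (∑ k, n k) + 1 ≤ l.length) : ∃ k, n k + 1 ≤ l.count k := by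
  by_contra hc
  push_neg at hc
  have : l.length ≤ ∑ k, n k := by
    rw [← montel_sum_count l]
    exact Finset.sum_le_sum fun k _ => Nat.lt_succ_iff.mp (hc k)
  omega

variable {s : ℕ} (h : Fin s → G) (n : Fin s → ℕ) (f : G → ℂ)

lemma montel_key_zero (hf : ∀ k : Fin s, (fwdDiffOp (h k))^[n k + 1] f = 0)
    (l : List (Fin s)) (k : Fin s) (hk : n k + 1 ≤ l.count k) :
    mixedDiff (l.map h) f = 0 := by
  have hperm : l.Perm (l.filter (fun x => !(x == k)) ++ List.replicate (l.count k) k) := by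
    have := List.filter_append_perm (fun x => !(x == k)) l
    have hrep : l.filter (fun x => !(!(x == k))) = List.replicate (l.count k) k := by
      simp only [Bool.not_not]
      convert (List.filter_eq k : l.filter (fun x => decide (x = k)) = _) using 2
      funext x; by_cases hx : x = k <;> simp [hx]
    rw [hrep] at this
    exact this.symm
  rw [mixedDiff_perm ((hperm.map h))]
  rw [List.map_append, mixedDiff_append]
  have hcnt : l.count k = (l.count k - (n k + 1)) + (n k + 1) := by omega
  have hin : mixedDiff (List.map h (List.replicate (l.count k) k)) f = 0 := by
    rw [List.map_replicate, mixedDiff_replicate, hcnt, Function.iterate_add_apply, hf k]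
    exact Function.iterate_fixed (fwdDiffOp_zero_fn (h k)) _
  rw [hin, mixedDiff_zero]

/-- the target span after applying `m` differences -/
def montelSpanS (m : ℕ) : Submodule ℂ (G → ℂ) :=
  Submodule.span ℂ {F | ∃ (a : G) (l : List (Fin s)), l.length = m ∧
    F = transOp a (mixedDiff (l.map h) f)}

lemma montel_trans_mem {m : ℕ} (b : G) {x : G → ℂ} (hx : x ∈ montelSpanS h f m) :
    transOp b x ∈ montelSpanS h f m := by
  have : montelSpanS h f m ≤ Submodule.comap (transLM b) (montelSpanS h f m) := by
    rw [montelSpanS, Submodule.span_le]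
    rintro F ⟨a, l, hl, rfl⟩
    simp only [SetLike.mem_coe, Submodule.mem_comap]
    show transOp b (transOp a (mixedDiff (List.map h l) f)) ∈ montelSpanS h f m
    rw [transOp_transOp]
    exact Submodule.subset_span ⟨b + a, l, hl, rfl⟩
  exact this hx

lemma montel_diff_mem {m : ℕ} {g : G} (hg : g ∈ AddSubgroup.closure (Set.range h))
    {x : G → ℂ} (hx : x ∈ montelSpanS h f m) : fwdDiffOp g x ∈ montelSpanS h f (m + 1) := by
  induction hg using AddSubgroup.closure_induction generalizing x with
  | mem g hgm =>
    obtain ⟨k, rfl⟩ := hgm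
    have : montelSpanS h f m ≤ Submodule.comap (diffLM (h k)) (montelSpanS h f (m + 1)) := by
      rw [montelSpanS, Submodule.span_le]
      rintro F ⟨a, l, hl, rfl⟩
      simp only [SetLike.mem_coe, Submodule.mem_comap]
      show fwdDiffOp (h k) (transOp a (mixedDiff (List.map h l) f)) ∈ montelSpanS h f (m + 1)
      rw [fwdDiffOp_trans]
      exact Submodule.subset_span ⟨a, k :: l, by simp [hl], by simp [mixedDiff]⟩
    exact this hx
  | zero => rw [fwdDiffOp_zero_pt]; exact Submodule.zero_mem _
  | add a b _ _ iha ihb =>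
    rw [fwdDiffOp_add_pt]
    exact Submodule.add_mem _ (montel_trans_mem h f b (iha hx)) (ihb hx)
  | neg a _ iha =>
    rw [fwdDiffOp_neg_pt]
    exact Submodule.neg_mem _ (montel_trans_mem h f (-a) (iha hx))

lemma montel_mixed_mem (gl : List G)
    (hgl : ∀ a ∈ gl, a ∈ AddSubgroup.closure (Set.range h)) :
    mixedDiff gl f ∈ montelSpanS h f gl.length := by
  induction gl with
  | nil =>
    refine Submodule.subset_span ⟨0, [], rfl, ?_⟩
    rw [transOp_zero]; rfl
  | cons a t ih =>
    have hmem := ih (fun b hb => hgl b (List.mem_cons_of_mem a hb))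
    exact montel_diff_mem h f (hgl a List.mem_cons_self) hmem

lemma montel_alg_main (hf : ∀ k : Fin s, (fwdDiffOp (h k))^[n k + 1] f = 0)
    (gl : List G) (hlen : gl.length = (∑ k, n k) + 1)
    (hgl : ∀ a ∈ gl, a ∈ AddSubgroup.closure (Set.range h)) :
    mixedDiff gl f = 0 := by
  have hm := montel_mixed_mem h f gl hgl
  have hzero : montelSpanS h f gl.length = ⊥ := by
    rw [montelSpanS, ← Submodule.span_empty (R := ℂ) (M := G → ℂ)]
    refine le_antisymm (Submodule.span_le.mpr ?_) (Submodule.span_mono (by simp))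
    rintro F ⟨a, l, hl, rfl⟩
    obtain ⟨k, hk⟩ := montel_pigeonhole n l (by rw [hl, hlen])
    rw [montel_key_zero h n f hf l k hk]
    simp only [SetLike.mem_coe, Submodule.span_empty]
    have : transOp a (0 : G → ℂ) = 0 := rfl
    rw [this]; exact Submodule.zero_mem _
  rw [hzero] at hm
  simpa using hm

variable [TopologicalSpace G] [IsTopologicalAddGroup G]

lemma montel_cont_fwdDiffOp {F : G → ℂ} (hF : Continuous F) (a : G) :
    Continuous (fwdDiffOp a F) :=
  (hF.comp (continuous_id.add continuous_const)).sub hF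

lemma montel_cont_mixedDiff {F : G → ℂ} (hF : Continuous F) (l : List G) :
    Continuous (mixedDiff l F) := by
  induction l with
  | nil => exact hF
  | cons a t ih => exact montel_cont_fwdDiffOp ih a

lemma montel_cont_joint (Ψ : G → G → ℂ) (hΨ : Continuous fun p : G × G => Ψ p.1 p.2) :
    ∀ l : List G, Continuous fun p : G × G => mixedDiff l (Ψ p.1) p.2 := by
  intro l
  induction l with
  | nil => exact hΨ
  | cons a t ih =>
    show Continuous fun p : G × G => mixedDiff t (Ψ p.1) (p.2 + a) - mixedDiff t (Ψ p.1) p.2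
    exact (ih.comp (continuous_fst.prodMk (continuous_snd.add continuous_const))).sub ih

lemma montel_top_main
    (hgen : closure ((AddSubgroup.closure (Set.range h) : AddSubgroup G) : Set G) = Set.univ)
    (hcont : Continuous f)
    (hf : ∀ k : Fin s, (fwdDiffOp (h k))^[n k + 1] f = 0) :
    ∀ (l₁ l₂ : List G), l₁.length + l₂.length = (∑ k, n k) + 1 →
      (∀ a ∈ l₂, a ∈ AddSubgroup.closure (Set.range h)) →
      mixedDiff (l₁ ++ l₂) f = 0 := by
  intro l₁
  induction l₁ using List.reverseRecOn with
  | nil =>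
    intro l₂ hlen hmem
    simpa using montel_alg_main h n f hf l₂ (by simpa using hlen) hmem
  | append_singleton l₁' a ih =>
    intro l₂ hlen hmem
    rw [List.append_assoc, List.singleton_append]
    funext x
    set F₂ : G → ℂ := mixedDiff l₂ f with hF₂
    have hF₂c : Continuous F₂ := montel_cont_mixedDiff hcont l₂
    have hΨ : Continuous fun p : G × G => (fwdDiffOp p.1 F₂) p.2 := by
      show Continuous fun p : G × G => F₂ (p.2 + p.1) - F₂ p.2
      exact (hF₂c.comp (continuous_snd.add continuous_fst)).sub (hF₂c.comp continuous_snd)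
    have hφ : Continuous fun t : G => mixedDiff (l₁' ++ t :: l₂) f x := by
      have : (fun t : G => mixedDiff (l₁' ++ t :: l₂) f x)
          = fun t : G => mixedDiff l₁' (fwdDiffOp t F₂) x := by
        funext t
        rw [mixedDiff_append]
        rfl
      rw [this]
      exact (montel_cont_joint (fun t => fwdDiffOp t F₂) hΨ l₁').comp
        (continuous_id.prodMk continuous_const)
    have hZclosed : IsClosed {t : G | mixedDiff (l₁' ++ t :: l₂) f x = 0} :=
      isClosed_singleton.preimage hφ
    have hsub : ((AddSubgroup.closure (Set.range h) : AddSubgroup G) : Set G)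
        ⊆ {t : G | mixedDiff (l₁' ++ t :: l₂) f x = 0} := by
      intro t ht
      have := ih (t :: l₂) (by simp at hlen ⊢; omega)
        (by intro b hb; rcases List.mem_cons.mp hb with rfl | hb
            · exact ht
            · exact hmem b hb)
      simp only [Set.mem_setOf_eq, this, Pi.zero_apply]
    have : a ∈ {t : G | mixedDiff (l₁' ++ t :: l₂) f x = 0} := by
      have h1 : closure ((AddSubgroup.closure (Set.range h) : AddSubgroup G) : Set G)
          ⊆ {t : G | mixedDiff (l₁' ++ t :: l₂) f x = 0} := by
        rw [← hZclosed.closure_eq]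
        exact closure_mono hsub
      rw [hgen] at h1
      exact h1 (Set.mem_univ a)
    simpa using this

end MontelAux

/-- **Montel-type theorem, unmixed differences, topological version.**
If `h 1, …, h s` topologically generate the commutative topological group `G`,
`f` is continuous and `Δ_{h k}^{n k + 1} f = 0` for each `k`, then `f` is a polynomial
of degree at most `N = n 1 + ⋯ + n s`. -/
theorem montel_unmixed_topological {G : Type*} [AddCommGroup G] [TopologicalSpace G]
    [IsTopologicalAddGroup G] {s : ℕ}
    (h : Fin s → G) (n : Fin s → ℕ)
    (hgen : closure ((AddSubgroup.closure (Set.range h) : AddSubgroup G) : Set G) = Set.univ)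
    (f : G → ℂ) (hcont : Continuous f)
    (hf : ∀ k : Fin s, (fwdDiffOp (h k))^[n k + 1] f = 0) :
    ∀ g : Fin ((∑ k, n k) + 1) → G, mixedDiff (List.ofFn g).reverse f = 0 := by
  intro g
  have := montel_top_main h n f hgen hcont hf (List.ofFn g).reverse [] (by simp) (by simp)
  simpa using this
end
end

section
/- Let h_1, …, h_s ∈ ℝ^d topologically generate ℝ^d (the closure of h_1ℤ + ⋯ + h_sℤ is ℝ^d), and let n_1, …, n_s be nonnegative integers. If f : ℝ^d → ℂ is continuous and satisfies Δ_{h_k}^{n_k + 1} f = 0 for every k = 1, …, s, then f is an ordinary polynomial function in d real variables of total degree at most n_1 + ⋯ + n_s (i.e. f(x) = P(x_1, …, x_d) for a polynomial P with complex coefficients of total degree ≤ n_1 + ⋯ + n_s). -/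
noncomputable section

namespace Montel
open Function

variable {G : Type*} [AddCommGroup G]

lemma fwdDiffOp_eq_fwdDiff (a : G) : (fwdDiffOp a : (G → ℂ) → G → ℂ) = fwdDiff a := rfl

@[simp] lemma transOp_apply (a : G) (f : G → ℂ) (x : G) : transOp a f x = f (x + a) := rfl
@[simp] lemma fwdDiffOp_apply (a : G) (f : G → ℂ) (x : G) :
    fwdDiffOp a f x = f (x + a) - f x := rfl

lemma transOp_transOp (a b : G) (f : G → ℂ) : transOp a (transOp b f) = transOp (a + b) f := by
  funext x; simp [transOp, add_assoc]

@[simp] lemma transOp_zero (f : G → ℂ) : transOp (0 : G) f = f := by funext x; simp [transOp]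

lemma transOp_add (a : G) (f g : G → ℂ) : transOp a (f + g) = transOp a f + transOp a g := rfl
lemma transOp_smul (a : G) (c : ℂ) (f : G → ℂ) : transOp a (c • f) = c • transOp a f := rfl
@[simp] lemma transOp_zero_fun (a : G) : transOp a (0 : G → ℂ) = 0 := rfl

lemma fwdDiffOp_addf (a : G) (f g : G → ℂ) :
    fwdDiffOp a (f + g) = fwdDiffOp a f + fwdDiffOp a g := by
  funext x; simp [fwdDiffOp]; ring

lemma fwdDiffOp_smulf (a : G) (c : ℂ) (f : G → ℂ) :
    fwdDiffOp a (c • f) = c • fwdDiffOp a f := by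
  funext x; simp [fwdDiffOp]; ring

@[simp] lemma fwdDiffOp_zero_fun (a : G) : fwdDiffOp a (0 : G → ℂ) = 0 := by
  funext x; simp [fwdDiffOp]

@[simp] lemma fwdDiffOp_iter_zero_fun (a : G) (m : ℕ) :
    (fwdDiffOp a)^[m] (0 : G → ℂ) = 0 := by
  induction m with
  | zero => rfl
  | succ m ih => rw [Function.iterate_succ_apply, fwdDiffOp_zero_fun, ih]

lemma fwdDiffOp_zero_step (f : G → ℂ) : fwdDiffOp (0 : G) f = 0 := by
  funext x; simp [fwdDiffOp]

lemma fwdDiffOp_transOp (a b : G) (f : G → ℂ) :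
    fwdDiffOp a (transOp b f) = transOp b (fwdDiffOp a f) := by
  funext x; simp [fwdDiffOp, transOp, add_right_comm]

lemma fwdDiffOp_comm (a b : G) (f : G → ℂ) :
    fwdDiffOp a (fwdDiffOp b f) = fwdDiffOp b (fwdDiffOp a f) := by
  funext x; simp [fwdDiffOp, add_right_comm]; ring

lemma fwdDiffOp_add_step (a b : G) (f : G → ℂ) :
    fwdDiffOp (a + b) f = fwdDiffOp a (transOp b f) + fwdDiffOp b f := by
  funext x
  simp [fwdDiffOp, transOp, add_right_comm, add_assoc]

lemma fwdDiffOp_neg_step (a : G) (f : G → ℂ) :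
    fwdDiffOp (-a) f = -(transOp (-a) (fwdDiffOp a f)) := by
  funext x; simp [fwdDiffOp, transOp]

lemma mixedDiff_append (L₁ L₂ : List G) (f : G → ℂ) :
    mixedDiff (L₁ ++ L₂) f = mixedDiff L₁ (mixedDiff L₂ f) := by
  induction L₁ with
  | nil => rfl
  | cons a t ih => simp [mixedDiff, ih]

lemma mixedDiff_replicate (m : ℕ) (a : G) (f : G → ℂ) :
    mixedDiff (List.replicate m a) f = (fwdDiffOp a)^[m] f := by
  induction m with
  | zero => rfl
  | succ m ih =>
    rw [List.replicate_succ]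
    show fwdDiffOp a (mixedDiff (List.replicate m a) f) = _
    rw [ih, ← Function.iterate_succ_apply' (fwdDiffOp a)]

@[simp] lemma mixedDiff_zero_fun (L : List G) : mixedDiff L (0 : G → ℂ) = 0 := by
  induction L with
  | nil => rfl
  | cons a t ih => show fwdDiffOp a (mixedDiff t 0) = 0; rw [ih, fwdDiffOp_zero_fun]

lemma mixedDiff_perm {L L' : List G} (hp : L.Perm L') (f : G → ℂ) :
    mixedDiff L f = mixedDiff L' f := by
  induction hp with
  | nil => rfl
  | cons a _ ih => show fwdDiffOp a _ = fwdDiffOp a _; rw [ih]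
  | swap a b t =>
    show fwdDiffOp b (fwdDiffOp a (mixedDiff t f)) = fwdDiffOp a (fwdDiffOp b (mixedDiff t f))
    exact fwdDiffOp_comm b a _
  | trans _ _ ih₁ ih₂ => rw [ih₁, ih₂]

lemma length_eq_sum_count {s : ℕ} (l : List (Fin s)) :
    l.length = ∑ k : Fin s, l.count k := by
  induction l with
  | nil => simp
  | cons a t ih =>
    simp only [List.length_cons, List.count_cons, ih]
    rw [Finset.sum_add_distrib]
    simp

lemma exists_count_ge {s : ℕ} (n : Fin s → ℕ) (l : List (Fin s))
    (hl : (∑ k, n k) + 1 ≤ l.length) : ∃ k, n k + 1 ≤ l.count k := by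
  by_contra hc
  push_neg at hc
  have h1 : ∀ k, l.count k ≤ n k := fun k => by have := hc k; omega
  have := length_eq_sum_count l
  have h2 : ∑ k : Fin s, l.count k ≤ ∑ k, n k := Finset.sum_le_sum fun k _ => h1 k
  omega

lemma mixedDiff_map_eq_zero {s : ℕ} (h : Fin s → G) (n : Fin s → ℕ) (f : G → ℂ)
    (hf : ∀ k, (fwdDiffOp (h k))^[n k + 1] f = 0) (l : List (Fin s))
    (hl : (∑ k, n k) + 1 ≤ l.length) : mixedDiff (l.map h) f = 0 := by
  obtain ⟨k, hk⟩ := exists_count_ge n l hl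
  classical
  have hperm : l.Perm ((l.filter (fun x => !decide (x = k))) ++ l.filter (fun x => decide (x = k))) := by
    have := (List.filter_append_perm (fun x => decide (x = k)) l).symm
    exact this.trans List.perm_append_comm
  rw [mixedDiff_perm ((hperm.map h)) f]
  rw [List.map_append, mixedDiff_append, List.filter_eq, List.map_replicate,
    mixedDiff_replicate]
  obtain ⟨c, hc⟩ : ∃ c, List.count k l = c + (n k + 1) :=
    ⟨List.count k l - (n k + 1), by omega⟩
  rw [hc, Function.iterate_add_apply, hf k, fwdDiffOp_iter_zero_fun, mixedDiff_zero_fun]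


section Vw
variable {s : ℕ} (h : Fin s → G) (f : G → ℂ)

/-- Filtration by the number of difference operators applied. -/
def Vw (w : ℕ) : Submodule ℂ (G → ℂ) :=
  Submodule.span ℂ
    {φ | ∃ (a : G) (l : List (Fin s)), w ≤ l.length ∧ φ = transOp a (mixedDiff (l.map h) f)}

lemma self_mem_Vw : f ∈ Vw h f 0 := by
  apply Submodule.subset_span
  exact ⟨0, [], by simp, by simp [mixedDiff]⟩

lemma transOp_mem_Vw (b : G) (w : ℕ) {φ : G → ℂ} (hφ : φ ∈ Vw h f w) :
    transOp b φ ∈ Vw h f w := by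
  induction hφ using Submodule.span_induction with
  | mem x hx =>
    obtain ⟨a, l, hl, rfl⟩ := hx
    rw [transOp_transOp]
    exact Submodule.subset_span ⟨b + a, l, hl, rfl⟩
  | zero => rw [transOp_zero_fun]; exact Submodule.zero_mem _
  | add x y hx hy ihx ihy => rw [transOp_add]; exact Submodule.add_mem _ ihx ihy
  | smul c x hx ihx => rw [transOp_smul]; exact Submodule.smul_mem _ _ ihx

lemma fwdDiffOp_gen_mem_Vw (k : Fin s) (w : ℕ) {φ : G → ℂ} (hφ : φ ∈ Vw h f w) :
    fwdDiffOp (h k) φ ∈ Vw h f (w + 1) := by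
  induction hφ using Submodule.span_induction with
  | mem x hx =>
    obtain ⟨a, l, hl, rfl⟩ := hx
    rw [fwdDiffOp_transOp]
    refine Submodule.subset_span ⟨a, k :: l, by simp; omega, ?_⟩
    rfl
  | zero => rw [fwdDiffOp_zero_fun]; exact Submodule.zero_mem _
  | add x y hx hy ihx ihy => rw [fwdDiffOp_addf]; exact Submodule.add_mem _ ihx ihy
  | smul c x hx ihx => rw [fwdDiffOp_smulf]; exact Submodule.smul_mem _ _ ihx

lemma fwdDiffOp_mem_Vw {g : G} (hg : g ∈ AddSubgroup.closure (Set.range h)) :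
    ∀ (w : ℕ) {φ : G → ℂ}, φ ∈ Vw h f w → fwdDiffOp g φ ∈ Vw h f (w + 1) := by
  induction hg using AddSubgroup.closure_induction with
  | mem x hx =>
    obtain ⟨k, rfl⟩ := hx
    exact fun w _ hφ => fwdDiffOp_gen_mem_Vw h f k w hφ
  | zero => exact fun w φ hφ => by rw [fwdDiffOp_zero_step]; exact Submodule.zero_mem _
  | add x y hx hy ihx ihy =>
    intro w φ hφ
    rw [fwdDiffOp_add_step]
    exact Submodule.add_mem _ (ihx w (transOp_mem_Vw h f y w hφ)) (ihy w hφ)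
  | neg x hx ihx =>
    intro w φ hφ
    rw [fwdDiffOp_neg_step]
    exact Submodule.neg_mem _ (transOp_mem_Vw h f (-x) (w + 1) (ihx w hφ))

lemma mixedDiff_mem_Vw (L : List G) (hL : ∀ g ∈ L, g ∈ AddSubgroup.closure (Set.range h)) :
    mixedDiff L f ∈ Vw h f L.length := by
  induction L with
  | nil => exact self_mem_Vw h f
  | cons a t ih =>
    have := fwdDiffOp_mem_Vw h f (hL a (by simp)) t.length
      (ih (fun g hg => hL g (by simp [hg])))
    exact this

lemma mixedDiff_gen_eq_zero (n : Fin s → ℕ) (hf : ∀ k, (fwdDiffOp (h k))^[n k + 1] f = 0)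
    (L : List G) (hL : ∀ g ∈ L, g ∈ AddSubgroup.closure (Set.range h))
    (hlen : (∑ k, n k) + 1 ≤ L.length) : mixedDiff L f = 0 := by
  have hmem := mixedDiff_mem_Vw h f L hL
  have hbot : Vw h f L.length ≤ ⊥ := by
    rw [Vw, Submodule.span_le]
    rintro φ ⟨a, l, hl, rfl⟩
    have hz : mixedDiff (l.map h) f = 0 :=
      mixedDiff_map_eq_zero h n f hf l (by omega)
    rw [hz, transOp_zero_fun]
    simp
  simpa using hbot hmem

end Vw


section Topology
variable {d : ℕ}

lemma continuous_mixedDiff_ofFn (f : (Fin d → ℝ) → ℂ) (hcont : Continuous f) (m : ℕ) :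
    Continuous (fun p : (Fin m → (Fin d → ℝ)) × (Fin d → ℝ) =>
      mixedDiff (List.ofFn p.1) f p.2) := by
  induction m with
  | zero => exact hcont.comp continuous_snd
  | succ m ih =>
    have heq : (fun p : (Fin (m+1) → (Fin d → ℝ)) × (Fin d → ℝ) =>
          mixedDiff (List.ofFn p.1) f p.2)
        = fun p => mixedDiff (List.ofFn (fun i : Fin m => p.1 i.succ)) f (p.2 + p.1 0)
          - mixedDiff (List.ofFn (fun i : Fin m => p.1 i.succ)) f p.2 := by
      funext p
      rw [List.ofFn_succ]
      rfl
    rw [heq]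
    have c1 : Continuous fun p : (Fin (m+1) → (Fin d → ℝ)) × (Fin d → ℝ) =>
        (fun i : Fin m => p.1 i.succ) :=
      continuous_pi fun i => (continuous_apply (i.succ)).comp continuous_fst
    have c2 : Continuous fun p : (Fin (m+1) → (Fin d → ℝ)) × (Fin d → ℝ) =>
        p.2 + p.1 0 :=
      continuous_snd.add ((continuous_apply 0).comp continuous_fst)
    exact (ih.comp (c1.prodMk c2)).sub (ih.comp (c1.prodMk continuous_snd))

variable {s : ℕ} (h : Fin s → (Fin d → ℝ)) (n : Fin s → ℕ)

lemma mixedDiff_all_zero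
    (hgen : closure ((AddSubgroup.closure (Set.range h) : AddSubgroup (Fin d → ℝ)) :
      Set (Fin d → ℝ)) = Set.univ)
    (f : (Fin d → ℝ) → ℂ) (hcont : Continuous f)
    (hf : ∀ k, (fwdDiffOp (h k))^[n k + 1] f = 0)
    (g : Fin ((∑ k, n k) + 1) → (Fin d → ℝ)) : mixedDiff (List.ofFn g) f = 0 := by
  set N := ∑ k, n k with hN
  set Γ : Set (Fin d → ℝ) :=
    ((AddSubgroup.closure (Set.range h) : AddSubgroup (Fin d → ℝ)) : Set (Fin d → ℝ)) with hΓ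
  set S : Set (Fin (N+1) → (Fin d → ℝ)) := {g | mixedDiff (List.ofFn g) f = 0} with hS
  have hclosed : IsClosed S := by
    have hSeq : S = ⋂ x : (Fin d → ℝ), {g | mixedDiff (List.ofFn g) f x = 0} := by
      ext g
      simp only [hS, Set.mem_setOf_eq, Set.mem_iInter, funext_iff, Pi.zero_apply]
    rw [hSeq]
    refine isClosed_iInter fun x => ?_
    have hc : Continuous fun g : Fin (N+1) → (Fin d → ℝ) => mixedDiff (List.ofFn g) f x :=
      (continuous_mixedDiff_ofFn f hcont (N+1)).comp (continuous_id.prodMk continuous_const)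
    exact isClosed_eq hc continuous_const
  have hsub : (Set.univ.pi fun _ : Fin (N+1) => Γ) ⊆ S := by
    intro g hg
    refine mixedDiff_gen_eq_zero h f n hf (List.ofFn g) ?_ (by simp [hN])
    intro g' hg'
    rw [List.mem_ofFn] at hg'
    obtain ⟨i, rfl⟩ := hg'
    exact hg i (Set.mem_univ i)
  have hdense : closure (Set.univ.pi fun _ : Fin (N+1) => Γ) = Set.univ := by
    rw [closure_pi_set]
    simp [hgen]
  have : (Set.univ : Set (Fin (N+1) → (Fin d → ℝ))) ⊆ S := by
    rw [← hdense]
    exact closure_minimal hsub hclosed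
  exact this (Set.mem_univ g)

lemma pure_iter_zero
    (hgen : closure ((AddSubgroup.closure (Set.range h) : AddSubgroup (Fin d → ℝ)) :
      Set (Fin d → ℝ)) = Set.univ)
    (f : (Fin d → ℝ) → ℂ) (hcont : Continuous f)
    (hf : ∀ k, (fwdDiffOp (h k))^[n k + 1] f = 0)
    (g : Fin d → ℝ) : (fwdDiffOp g)^[(∑ k, n k) + 1] f = 0 := by
  rw [← mixedDiff_replicate, ← List.ofFn_const]
  exact mixedDiff_all_zero h n hgen f hcont hf _

end Topology


section OneVar
open Polynomial Finset

lemma fwdDiffOp_iter_comp {H : Type*} [AddCommGroup H] (e : H →+ G) (b : G) (f : G → ℂ)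
    (t : H) (m : ℕ) :
    (fwdDiffOp t)^[m] (fun u => f (e u + b)) = fun u => ((fwdDiffOp (e t))^[m] f) (e u + b) := by
  induction m with
  | zero => rfl
  | succ m ih =>
    rw [Function.iterate_succ_apply', Function.iterate_succ_apply', ih]
    funext u
    show ((fwdDiffOp (e t))^[m] f) (e (u + t) + b) - _
      = ((fwdDiffOp (e t))^[m] f) ((e u + b) + e t) - _
    rw [map_add, add_right_comm]

lemma iter_ge_zero (N : ℕ) (t : ℝ) (φ : ℝ → ℂ) (hφ : (fwdDiffOp t)^[N+1] φ = 0)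
    {k : ℕ} (hk : N + 1 ≤ k) : (fwdDiffOp t)^[k] φ = 0 := by
  obtain ⟨c, rfl⟩ : ∃ c, k = c + (N + 1) := ⟨k - (N+1), by omega⟩
  rw [Function.iterate_add_apply, hφ, fwdDiffOp_iter_zero_fun]

lemma newton_formula (N : ℕ) (φ : ℝ → ℂ) (hφ : ∀ t : ℝ, (fwdDiffOp t)^[N+1] φ = 0)
    (t x : ℝ) (j : ℕ) :
    φ (x + j • t) = ∑ k ∈ range (N+1), j.choose k • (fwdDiffOp t)^[k] φ x := by
  have base : φ (x + j • t) = ∑ k ∈ range (j+1), j.choose k • (fwdDiffOp t)^[k] φ x :=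
    shift_eq_sum_fwdDiff_iter t φ j x
  rw [base]
  rcases le_or_gt j N with hj | hj
  · apply Finset.sum_subset
    · intro k hk; simp only [mem_range] at *; omega
    · intro k hk hk'
      simp only [mem_range] at hk hk'
      rw [Nat.choose_eq_zero_of_lt (by omega), zero_smul]
  · symm
    apply Finset.sum_subset
    · intro k hk; simp only [mem_range] at *; omega
    · intro k hk hk'
      simp only [mem_range] at hk hk'
      rw [iter_ge_zero N t φ (hφ t) (by omega)]
      simp

/-- The Newton interpolation polynomial of `φ` with step `t`. -/
def newtonPoly (N : ℕ) (φ : ℝ → ℂ) (t : ℝ) : Polynomial ℂ :=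
  ∑ k ∈ range (N+1),
    Polynomial.C (((fwdDiffOp t)^[k] φ 0) * (k.factorial : ℂ)⁻¹) *
      ((descPochhammer ℂ k).comp (Polynomial.C ((t : ℂ)⁻¹) * Polynomial.X))

lemma newtonPoly_natDegree (N : ℕ) (φ : ℝ → ℂ) (t : ℝ) :
    (newtonPoly N φ t).natDegree ≤ N := by
  refine Polynomial.natDegree_sum_le_of_forall_le _ _ fun k hk => ?_
  refine le_trans (Polynomial.natDegree_C_mul_le _ _) ?_
  refine le_trans (Polynomial.natDegree_comp_le) ?_
  have h1 : (Polynomial.C ((t : ℂ)⁻¹) * Polynomial.X).natDegree ≤ 1 :=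
    le_trans (Polynomial.natDegree_C_mul_le _ _) (le_of_eq Polynomial.natDegree_X)
  have h2 : (descPochhammer ℂ k).natDegree = k := descPochhammer_natDegree (R := ℂ) k
  calc (descPochhammer ℂ k).natDegree * (Polynomial.C ((t : ℂ)⁻¹) * Polynomial.X).natDegree
      ≤ k * 1 := by rw [h2]; exact Nat.mul_le_mul_left _ h1
    _ ≤ N := by simp only [mem_range] at hk; omega

lemma newtonPoly_eval (N : ℕ) (φ : ℝ → ℂ) (hφ : ∀ t : ℝ, (fwdDiffOp t)^[N+1] φ = 0)
    (t : ℝ) (ht : t ≠ 0) (j : ℕ) :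
    (newtonPoly N φ t).eval ((j : ℂ) * (t : ℂ)) = φ (j * t) := by
  have htc : (t : ℂ) ≠ 0 := by exact_mod_cast ht
  have hx : (Polynomial.C ((t : ℂ)⁻¹) * Polynomial.X).eval ((j : ℂ) * (t : ℂ)) = (j : ℂ) := by
    simp; field_simp
  rw [newtonPoly, Polynomial.eval_finset_sum]
  have hterm : ∀ k ∈ range (N+1),
      (Polynomial.C (((fwdDiffOp t)^[k] φ 0) * (k.factorial : ℂ)⁻¹) *
        ((descPochhammer ℂ k).comp (Polynomial.C ((t : ℂ)⁻¹) * Polynomial.X))).eval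
          ((j : ℂ) * (t : ℂ))
      = j.choose k • (fwdDiffOp t)^[k] φ 0 := by
    intro k _
    rw [Polynomial.eval_mul, Polynomial.eval_C, Polynomial.eval_comp, hx,
      descPochhammer_eval_eq_descFactorial ℂ j k,
      Nat.descFactorial_eq_factorial_mul_choose]
    have hfac : (k.factorial : ℂ) ≠ 0 := by exact_mod_cast k.factorial_ne_zero
    push_cast
    field_simp
    ring
  rw [Finset.sum_congr rfl hterm]
  have := newton_formula N φ hφ t 0 j
  rw [zero_add] at this
  rw [← this]
  congr 1
  rw [nsmul_eq_mul]

lemma newtonPoly_half (N : ℕ) (φ : ℝ → ℂ) (hφ : ∀ t : ℝ, (fwdDiffOp t)^[N+1] φ = 0)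
    (t : ℝ) (ht : t ≠ 0) : newtonPoly N φ t = newtonPoly N φ (t/2) := by
  apply Polynomial.eq_of_infinite_eval_eq
  apply Set.infinite_of_injective_forall_mem (f := fun j : ℕ => (j : ℂ) * (t : ℂ))
  case hi =>
    intro a b hab
    have htc : (t : ℂ) ≠ 0 := by exact_mod_cast ht
    have : (a : ℂ) = b := by
      field_simp at hab
      tauto
    exact_mod_cast this
  case hf =>
    intro j
    show (newtonPoly N φ t).eval _ = (newtonPoly N φ (t/2)).eval _
    rw [newtonPoly_eval N φ hφ t ht j]
    have h2 : ((j : ℂ) * (t : ℂ)) = ((2 * j : ℕ) : ℂ) * ((t/2 : ℝ) : ℂ) := by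
      push_cast; ring
    rw [h2, newtonPoly_eval N φ hφ (t/2) (by simpa using ht) (2*j)]
    congr 1
    push_cast; ring

lemma newtonPoly_pow_half (N : ℕ) (φ : ℝ → ℂ) (hφ : ∀ t : ℝ, (fwdDiffOp t)^[N+1] φ = 0)
    (m : ℕ) : newtonPoly N φ (1 / 2^m) = newtonPoly N φ 1 := by
  induction m with
  | zero => norm_num
  | succ m ih =>
    have he : (1:ℝ)/2^(m+1) = (1/2^m)/2 := by ring
    rw [he, ← newtonPoly_half N φ hφ (1/2^m) (by positivity), ih]

lemma oneVar_nonneg (N : ℕ) (φ : ℝ → ℂ) (hc : Continuous φ)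
    (hφ : ∀ t : ℝ, (fwdDiffOp t)^[N+1] φ = 0) :
    ∀ x : ℝ, 0 ≤ x → φ x = (newtonPoly N φ 1).eval (x : ℂ) := by
  intro x hx
  set p := newtonPoly N φ 1 with hp
  set a : ℕ → ℝ := fun m => (⌊x * 2^m⌋₊ : ℝ) / 2^m with ha
  have hval : ∀ m, φ (a m) = p.eval ((a m : ℝ) : ℂ) := by
    intro m
    have h1 : a m = (⌊x * 2^m⌋₊ : ℕ) * (1 / 2^m : ℝ) := by rw [ha]; ring
    have h2 : ((a m : ℝ) : ℂ) = ((⌊x * 2^m⌋₊ : ℕ) : ℂ) * ((1 / 2^m : ℝ) : ℂ) := by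
      rw [h1]; push_cast; ring
    rw [h2, h1, hp, ← newtonPoly_pow_half N φ hφ m,
      newtonPoly_eval N φ hφ (1/2^m) (by positivity) _]
  have hta : Filter.Tendsto a Filter.atTop (nhds x) := by
    have hub : ∀ m, a m ≤ x := by
      intro m
      rw [ha]
      rw [div_le_iff₀ (by positivity)]
      exact Nat.floor_le (by positivity)
    have hlb : ∀ m, x - 1/2^m ≤ a m := by
      intro m
      have h2m : (0:ℝ) < 2^m := by positivity
      have h3 : x ≤ ((⌊x * 2^m⌋₊ : ℝ) + 1)/2^m := by
        rw [le_div_iff₀ h2m]; linarith [Nat.lt_floor_add_one (x * 2^m)]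
      have h4 : ((⌊x * 2^m⌋₊ : ℝ) + 1)/2^m - 1/2^m = (⌊x * 2^m⌋₊ : ℝ)/2^m := by ring
      show x - 1/2^m ≤ (⌊x * 2^m⌋₊ : ℝ)/2^m
      linarith
    have h0 : Filter.Tendsto (fun m : ℕ => x - 1/2^m) Filter.atTop (nhds x) := by
      have : Filter.Tendsto (fun m : ℕ => (1:ℝ)/2^m) Filter.atTop (nhds 0) := by
        simpa [one_div, inv_pow] using
          tendsto_pow_atTop_nhds_zero_of_lt_one (by norm_num : (0:ℝ) ≤ 1/2)
            (by norm_num : (1:ℝ)/2 < 1) |>.congr (fun m => by rw [div_pow]; norm_num)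
      simpa using Filter.Tendsto.sub tendsto_const_nhds this
    exact tendsto_of_tendsto_of_tendsto_of_le_of_le h0 tendsto_const_nhds hlb hub
  have h1 : Filter.Tendsto (fun m => φ (a m)) Filter.atTop (nhds (φ x)) :=
    (hc.tendsto x).comp hta
  have h2 : Filter.Tendsto (fun m => p.eval ((a m : ℝ) : ℂ)) Filter.atTop
      (nhds (p.eval (x : ℂ))) := by
    have hcont : Continuous fun y : ℝ => p.eval ((y : ℝ) : ℂ) :=
      p.continuous.comp Complex.continuous_ofReal
    exact (hcont.tendsto x).comp hta
  exact tendsto_nhds_unique h1 (h2.congr (fun m => (hval m).symm))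

lemma oneVar (N : ℕ) (φ : ℝ → ℂ) (hc : Continuous φ)
    (hφ : ∀ t : ℝ, (fwdDiffOp t)^[N+1] φ = 0) :
    ∃ p : Polynomial ℂ, p.natDegree ≤ N ∧ ∀ x : ℝ, φ x = p.eval (x : ℂ) := by
  have key : ∀ c : ℝ, ∃ q : Polynomial ℂ, q.natDegree ≤ N ∧
      ∀ y : ℝ, c ≤ y → φ y = q.eval (y : ℂ) := by
    intro c
    set ψ : ℝ → ℂ := fun u => φ (u + c) with hψ
    have hψc : Continuous ψ := hc.comp (continuous_id.add continuous_const)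
    have hψd : ∀ t : ℝ, (fwdDiffOp t)^[N+1] ψ = 0 := by
      intro t
      have := fwdDiffOp_iter_comp (AddMonoidHom.id ℝ) c φ t (N+1)
      simp only [AddMonoidHom.id_apply] at this
      rw [hψ, this, hφ t]
      rfl
    have hψp := oneVar_nonneg N ψ hψc hψd
    refine ⟨(newtonPoly N ψ 1).comp (Polynomial.X - Polynomial.C (c : ℂ)), ?_, ?_⟩
    · refine le_trans Polynomial.natDegree_comp_le ?_
      rw [Polynomial.natDegree_X_sub_C, mul_one]
      exact newtonPoly_natDegree N ψ 1
    · intro y hy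
      have := hψp (y - c) (by linarith)
      rw [hψ] at this
      simp only [sub_add_cancel] at this
      rw [this, Polynomial.eval_comp]
      push_cast
      simp
      rfl
  obtain ⟨q0, hq0, hq0e⟩ := key 0
  refine ⟨q0, hq0, fun y => ?_⟩
  rcases le_or_gt 0 y with hy | hy
  · exact hq0e y hy
  obtain ⟨qy, hqy, hqye⟩ := key y
  have hagree : q0 = qy := by
    apply Polynomial.eq_of_infinite_eval_eq
    apply Set.infinite_of_injective_forall_mem (f := fun j : ℕ => ((j : ℝ) : ℂ))
    case hi =>
      intro a b hab
      have : ((a:ℝ):ℂ) = ((b:ℝ):ℂ) := hab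
      exact_mod_cast this
    case hf =>
      intro j
      show q0.eval _ = qy.eval _
      rw [← hq0e j (by positivity), ← hqye j (by exact le_trans hy.le (by positivity))]
  rw [hagree]
  exact hqye y le_rfl

end OneVar


section MultiVar
open Polynomial Finset

lemma cons_eq_add (d : ℕ) (t : ℝ) (x' : Fin d → ℝ) :
    (Fin.cons t x' : Fin (d+1) → ℝ)
      = Fin.cons t (0 : Fin d → ℝ) + Fin.cons (0:ℝ) x' := by
  funext i
  refine Fin.cases ?_ ?_ i <;> simp

def consHom (d : ℕ) : ℝ →+ (Fin (d+1) → ℝ) where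
  toFun t := Fin.cons t (0 : Fin d → ℝ)
  map_zero' := by funext i; refine Fin.cases ?_ ?_ i <;> simp
  map_add' a b := by funext i; refine Fin.cases ?_ ?_ i <;> simp

def tailHom (d : ℕ) : (Fin d → ℝ) →+ (Fin (d+1) → ℝ) where
  toFun y := Fin.cons 0 y
  map_zero' := by funext i; refine Fin.cases ?_ ?_ i <;> simp
  map_add' a b := by funext i; refine Fin.cases ?_ ?_ i <;> simp

lemma exists_mv_poly : ∀ (d N : ℕ) (f : (Fin d → ℝ) → ℂ), Continuous f →
    (∀ g : Fin d → ℝ, (fwdDiffOp g)^[N+1] f = 0) →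
    ∃ P : MvPolynomial (Fin d) ℂ,
      ∀ x : Fin d → ℝ, f x = MvPolynomial.eval (fun i => (x i : ℂ)) P := by
  intro d
  induction d with
  | zero =>
    intro N f _ _
    refine ⟨MvPolynomial.C (f fun i => 0), fun x => ?_⟩
    rw [MvPolynomial.eval_C]
    congr 1
    exact funext fun i => i.elim0
  | succ d ih =>
    intro N f hcont hf
    classical
    have hconsc : ∀ x' : Fin d → ℝ, Continuous fun u : ℝ =>
        (Fin.cons u x' : Fin (d+1) → ℝ) := by
      intro x'
      refine continuous_pi fun i => ?_
      refine Fin.cases ?_ ?_ i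
      · simpa using continuous_id'
      · intro j; simpa using continuous_const
    have htailc : ∀ u : ℝ, Continuous fun x' : Fin d → ℝ =>
        (Fin.cons u x' : Fin (d+1) → ℝ) := by
      intro u
      refine continuous_pi fun i => ?_
      refine Fin.cases ?_ ?_ i
      · simpa using continuous_const
      · intro j; simpa using continuous_apply j
    set v : Fin (N+1) → ℂ := fun m => ((m : ℕ) : ℂ) with hv
    have hinj : Set.InjOn v (Finset.univ : Finset (Fin (N+1))) := by
      intro a _ b _ hab
      simp only [hv] at hab
      have : (a : ℕ) = (b : ℕ) := by exact_mod_cast hab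
      exact Fin.ext this
    set c : ℕ → (Fin d → ℝ) → ℂ := fun j x' =>
      ∑ m : Fin (N+1), (Lagrange.basis Finset.univ v m).coeff j *
        f (Fin.cons (((m : ℕ) : ℝ)) x') with hcdef
    have hkey : ∀ (t : ℝ) (x' : Fin d → ℝ),
        f (Fin.cons t x') = ∑ j ∈ range (N+1), c j x' * (t : ℂ)^j := by
      intro t x'
      set φ : ℝ → ℂ := fun u => f (Fin.cons u x') with hφdef
      have hφc : Continuous φ := hcont.comp (hconsc x')
      have hφd : ∀ s : ℝ, (fwdDiffOp s)^[N+1] φ = 0 := by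
        intro s
        have hrw : φ = fun u => f (consHom d u + Fin.cons 0 x') := by
          funext u
          show f (Fin.cons u x') = _
          exact congrArg f (cons_eq_add d u x')
        rw [hrw, fwdDiffOp_iter_comp (consHom d) (Fin.cons (0:ℝ) x') f s (N+1)]
        have : (fwdDiffOp (consHom d s))^[N+1] f = 0 := hf _
        rw [this]
        rfl
      obtain ⟨p, hpd, hpe⟩ := oneVar N φ hφc hφd
      have hdeg : p.degree < (Finset.univ : Finset (Fin (N+1))).card := by
        refine lt_of_le_of_lt Polynomial.degree_le_natDegree ?_
        rw [Finset.card_univ, Fintype.card_fin]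
        exact_mod_cast Nat.lt_succ_of_le hpd
      have hinterp := Lagrange.eq_interpolate hinj hdeg
      have hcoeff : ∀ j, p.coeff j = c j x' := by
        intro j
        conv_lhs => rw [hinterp]
        rw [Lagrange.interpolate_apply, Polynomial.finset_sum_coeff]
        refine Finset.sum_congr rfl fun m _ => ?_
        rw [Polynomial.coeff_C_mul]
        have hvm : v m = ((((m : ℕ) : ℝ)) : ℂ) := by
          rw [hv]; push_cast; rfl
        have hev : p.eval (v m) = f (Fin.cons (((m : ℕ) : ℝ)) x') := by
          have h5 := hpe (((m : ℕ) : ℝ))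
          rw [hφdef] at h5
          simp only at h5
          rw [hvm, ← h5]
        rw [hev, mul_comm]
      have heval : f (Fin.cons t x') = p.eval ((t : ℝ) : ℂ) := hpe t
      rw [heval, Polynomial.eval_eq_sum_range' (Nat.lt_succ_of_le hpd)]
      exact Finset.sum_congr rfl fun j _ => by rw [hcoeff j]
    have hcc : ∀ j : ℕ, Continuous (c j) := by
      intro j
      rw [hcdef]
      refine continuous_finset_sum _ fun m _ => ?_
      exact continuous_const.mul (hcont.comp (htailc _))
    have hcd : ∀ (j : ℕ) (g : Fin d → ℝ), (fwdDiffOp g)^[N+1] (c j) = 0 := by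
      intro j g
      have hrw : c j = ∑ m : Fin (N+1),
          ((Lagrange.basis Finset.univ v m).coeff j) •
            (fun x' : Fin d → ℝ =>
              f (tailHom d x' + Fin.cons (((m : ℕ) : ℝ)) (0 : Fin d → ℝ))) := by
        funext x'
        rw [hcdef]
        simp only [Finset.sum_apply, Pi.smul_apply, smul_eq_mul]
        refine Finset.sum_congr rfl fun m _ => ?_
        have harg : (Fin.cons (((m : ℕ) : ℝ)) x' : Fin (d+1) → ℝ)
            = tailHom d x' + Fin.cons (((m : ℕ) : ℝ)) (0 : Fin d → ℝ) := by
          rw [cons_eq_add]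
          exact add_comm _ _
        rw [harg]
      rw [hrw]
      show (fwdDiff g)^[N+1] _ = 0
      rw [fwdDiff_iter_finset_sum]
      refine Finset.sum_eq_zero fun m _ => ?_
      rw [fwdDiff_iter_const_smul]
      have := fwdDiffOp_iter_comp (tailHom d) (Fin.cons (((m : ℕ) : ℝ)) (0 : Fin d → ℝ)) f g (N+1)
      show ((Lagrange.basis Finset.univ v m).coeff j) • (fwdDiffOp g)^[N+1] _ = 0
      rw [this, hf (tailHom d g)]
      show _ • (fun _ => (0 : ℂ)) = 0
      funext x'
      simp
    have hQ : ∀ j : ℕ, ∃ Q : MvPolynomial (Fin d) ℂ,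
        ∀ x' : Fin d → ℝ, c j x' = MvPolynomial.eval (fun i => (x' i : ℂ)) Q :=
      fun j => ih N (c j) (hcc j) (hcd j)
    choose Q hQe using hQ
    refine ⟨∑ j ∈ range (N+1),
      (MvPolynomial.X 0)^j * MvPolynomial.rename Fin.succ (Q j), fun x => ?_⟩
    rw [map_sum]
    have hx : x = Fin.cons (x 0) (Fin.tail x) := (Fin.cons_self_tail x).symm
    conv_lhs => rw [hx]
    rw [hkey (x 0) (Fin.tail x)]
    refine Finset.sum_congr rfl fun j _ => ?_
    rw [map_mul, map_pow, MvPolynomial.eval_X, MvPolynomial.eval_rename]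
    rw [hQe j (Fin.tail x)]
    rw [mul_comm]
    rfl

end MultiVar


section DegreeBound
open Polynomial Finset

lemma mv_eval_real_zero : ∀ (d : ℕ) (Q : MvPolynomial (Fin d) ℂ),
    (∀ x : Fin d → ℝ, MvPolynomial.eval (fun i => (x i : ℂ)) Q = 0) → Q = 0 := by
  intro d
  induction d with
  | zero =>
    intro Q hQ
    obtain ⟨q, rfl⟩ := MvPolynomial.C_surjective (Fin 0) Q
    have := hQ (fun _ => 0)
    rw [MvPolynomial.eval_C] at this
    rw [this, map_zero]
  | succ d ih =>
    intro Q hQ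
    have hW : ∀ x' : Fin d → ℝ,
        Polynomial.map (MvPolynomial.eval (fun i => (x' i : ℂ)))
          (MvPolynomial.finSuccEquiv ℂ d Q) = 0 := by
      intro x'
      apply Polynomial.eq_zero_of_infinite_isRoot
      apply Set.infinite_of_injective_forall_mem (f := fun y : ℝ => (y : ℂ))
      case hi => exact fun a b hab => Complex.ofReal_injective hab
      case hf =>
        intro y
        show Polynomial.IsRoot _ _
        have hq := hQ (Fin.cons y x')
        have harg : (fun i => ((Fin.cons y x' : Fin (d+1) → ℝ) i : ℂ))
            = Fin.cons (y : ℂ) (fun i => (x' i : ℂ)) := by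
          funext i
          refine Fin.cases ?_ ?_ i <;> simp
        rw [harg, MvPolynomial.eval_eq_eval_mv_eval'] at hq
        exact hq
    have hcoeffs : ∀ k, (MvPolynomial.finSuccEquiv ℂ d Q).coeff k = 0 := by
      intro k
      apply ih
      intro x'
      have := congrArg (fun p => p.coeff k) (hW x')
      simpa [Polynomial.coeff_map] using this
    have hz : MvPolynomial.finSuccEquiv ℂ d Q = 0 := Polynomial.ext fun k => by
      rw [hcoeffs k, Polynomial.coeff_zero]
    have := (MvPolynomial.finSuccEquiv ℂ d).injective
      (by rw [hz, map_zero] : MvPolynomial.finSuccEquiv ℂ d Q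
        = MvPolynomial.finSuccEquiv ℂ d 0)
    exact this

lemma coeff_aeval_line {d : ℕ} (w : Fin d → ℂ) (P : MvPolynomial (Fin d) ℂ) (D : ℕ) :
    (MvPolynomial.aeval (fun i => Polynomial.C (w i) * Polynomial.X) P).coeff D
      = MvPolynomial.eval w (MvPolynomial.homogeneousComponent D P) := by
  induction P using MvPolynomial.induction_on' with
  | add p q ihp ihq => simp [map_add, ihp, ihq]
  | monomial α c =>
    rw [MvPolynomial.aeval_monomial]
    have hprod : (α.prod fun i k => (Polynomial.C (w i) * Polynomial.X) ^ k)
        = Polynomial.C (α.prod fun i k => w i ^ k) *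
            Polynomial.X ^ (∑ i ∈ α.support, α i) := by
      rw [Finsupp.prod, Finsupp.prod]
      rw [← Finset.prod_pow_eq_pow_sum]
      rw [map_prod, ← Finset.prod_mul_distrib]
      refine Finset.prod_congr rfl fun i _ => ?_
      rw [mul_pow, Polynomial.C_pow]
    rw [hprod, Polynomial.algebraMap_eq, ← mul_assoc, ← map_mul,
      Polynomial.coeff_C_mul, Polynomial.coeff_X_pow]
    have hhc : MvPolynomial.eval w
        (MvPolynomial.homogeneousComponent D (MvPolynomial.monomial α c))
        = if (∑ i ∈ α.support, α i) = D then c * (α.prod fun i k => w i ^ k) else 0 := by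
      have hmon : MvPolynomial.homogeneousComponent D (MvPolynomial.monomial α c)
          = if (∑ i ∈ α.support, α i) = D then MvPolynomial.monomial α c else 0 := by
        apply MvPolynomial.ext
        intro β
        rw [MvPolynomial.coeff_homogeneousComponent]
        by_cases hβ : β = α
        · subst hβ
          have hdeg : β.degree = ∑ i ∈ β.support, β i := rfl
          by_cases hD : (∑ i ∈ β.support, β i) = D
          · rw [if_pos (hdeg.trans hD), if_pos hD]
          · rw [if_neg (fun hcon => hD (hdeg.symm.trans hcon)), if_neg hD,
              MvPolynomial.coeff_zero]
        · have hc0 : MvPolynomial.coeff β (MvPolynomial.monomial α c) = 0 := by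
            rw [MvPolynomial.coeff_monomial, if_neg (fun hh => hβ hh.symm)]
          split_ifs <;> simp [hc0]
      rw [hmon]
      split_ifs with hD
      · rw [MvPolynomial.eval_monomial]
      · simp
    rw [hhc]
    by_cases hS : (∑ i ∈ α.support, α i) = D
    · rw [if_pos hS.symm, if_pos hS, mul_one]
    · rw [if_neg (fun hh => hS hh.symm), if_neg hS, mul_zero]

lemma line_poly_eval {d : ℕ} (w : Fin d → ℂ) (P : MvPolynomial (Fin d) ℂ) (t : ℂ) :
    (MvPolynomial.aeval (fun i => Polynomial.C (w i) * Polynomial.X) P).eval t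
      = MvPolynomial.eval (fun i => w i * t) P := by
  induction P using MvPolynomial.induction_on with
  | C a => simp
  | add p q ihp ihq => simp [ihp, ihq]
  | mul_X p i ih => simp [ih]

lemma totalDegree_le_of_line {d : ℕ} (N : ℕ) (P : MvPolynomial (Fin d) ℂ)
    (hdeg : ∀ v : Fin d → ℝ,
      (MvPolynomial.aeval
        (fun i => Polynomial.C ((v i : ℂ)) * Polynomial.X) P).natDegree ≤ N) :
    P.totalDegree ≤ N := by
  by_contra hgt
  push_neg at hgt
  set D := P.totalDegree with hD
  have hPne : P ≠ 0 := by
    intro h0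
    have hg2 : N < P.totalDegree := hD ▸ hgt
    rw [h0] at hg2
    simp [MvPolynomial.totalDegree_zero] at hg2
  have hsupp : P.support.Nonempty := MvPolynomial.support_nonempty.mpr hPne
  obtain ⟨α, hαs, hαd⟩ := Finset.exists_mem_eq_sup P.support hsupp
    (fun s => s.sum fun _ e => e)
  have hH : MvPolynomial.homogeneousComponent D P ≠ 0 := by
    intro h0
    have hc := MvPolynomial.coeff_homogeneousComponent (σ := Fin d) (R := ℂ) D P α
    rw [h0] at hc
    have htd : P.totalDegree = α.sum fun _ e => e := hαd
    have hdd : α.degree = D := by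
      rw [hD, htd]
      rfl
    rw [if_pos hdd, MvPolynomial.coeff_zero] at hc
    exact (MvPolynomial.mem_support_iff.mp hαs) hc.symm
  have hex : ∃ vr : Fin d → ℝ,
      MvPolynomial.eval (fun i => (vr i : ℂ)) (MvPolynomial.homogeneousComponent D P) ≠ 0 := by
    by_contra hno
    push_neg at hno
    exact hH (mv_eval_real_zero d _ hno)
  obtain ⟨vr, hvr⟩ := hex
  have hcoeff := coeff_aeval_line (fun i => (vr i : ℂ)) P D
  have hne : (MvPolynomial.aeval
      (fun i => Polynomial.C ((vr i : ℂ)) * Polynomial.X) P).coeff D ≠ 0 := by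
    rw [hcoeff]; exact hvr
  have := Polynomial.le_natDegree_of_ne_zero hne
  have := hdeg vr
  omega

end DegreeBound

end Montel


/-- **Montel-type theorem on `ℝ^d`.** If `h 1, …, h s` topologically generate `ℝ^d`,
`f : ℝ^d → ℂ` is continuous and `Δ_{h k}^{n k + 1} f = 0` for each `k`, then `f` is an
ordinary polynomial function in `d` real variables of total degree at most `n 1 + ⋯ + n s`. -/
theorem montel_unmixed_Rd {d s : ℕ}
    (h : Fin s → (Fin d → ℝ)) (n : Fin s → ℕ)
    (hgen : closure ((AddSubgroup.closure (Set.range h) : AddSubgroup (Fin d → ℝ)) :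
      Set (Fin d → ℝ)) = Set.univ)
    (f : (Fin d → ℝ) → ℂ) (hcont : Continuous f)
    (hf : ∀ k : Fin s, (fwdDiffOp (h k))^[n k + 1] f = 0) :
    ∃ P : MvPolynomial (Fin d) ℂ, P.totalDegree ≤ ∑ k, n k ∧
      ∀ x : Fin d → ℝ, f x = MvPolynomial.eval (fun i => (x i : ℂ)) P := by
  classical
  set N := ∑ k, n k with hN
  have hpure : ∀ g : Fin d → ℝ, (fwdDiffOp g)^[N+1] f = 0 :=
    Montel.pure_iter_zero h n hgen f hcont hf
  obtain ⟨P, hP⟩ := Montel.exists_mv_poly d N f hcont hpure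
  refine ⟨P, ?_, hP⟩
  apply Montel.totalDegree_le_of_line N P
  intro v
  set e : ℝ →+ (Fin d → ℝ) := AddMonoidHom.mk' (fun t : ℝ => t • v)
    (fun a b => add_smul a b v) with he
  set φ : ℝ → ℂ := fun t => f (t • v) with hφ
  have hφc : Continuous φ := hcont.comp (continuous_id.smul continuous_const)
  have hφd : ∀ t : ℝ, (fwdDiffOp t)^[N+1] φ = 0 := by
    intro t
    have hrw : φ = fun u => f (e u + 0) := by
      funext u
      rw [add_zero]
      rfl
    rw [hrw, Montel.fwdDiffOp_iter_comp e 0 f t (N+1), hpure (e t)]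
    rfl
  obtain ⟨q, hqd, hqe⟩ := Montel.oneVar N φ hφc hφd
  have hagree : ∀ t : ℝ,
      (MvPolynomial.aeval (fun i => Polynomial.C ((v i : ℂ)) * Polynomial.X) P).eval
        ((t : ℝ) : ℂ) = q.eval ((t : ℝ) : ℂ) := by
    intro t
    rw [Montel.line_poly_eval]
    have h1 := hP (t • v)
    have h2 : (fun i => (((t • v) i : ℝ) : ℂ)) = fun i => (v i : ℂ) * ((t : ℝ) : ℂ) := by
      funext i
      rw [Pi.smul_apply, smul_eq_mul]
      push_cast
      ring
    rw [h2] at h1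
    rw [← h1]
    have h3 : f (t • v) = q.eval ((t : ℝ) : ℂ) := by
      have h4 := hqe t
      rw [hφ] at h4
      simpa using h4
    exact h3
  have heq : (MvPolynomial.aeval (fun i => Polynomial.C ((v i : ℂ)) * Polynomial.X) P) = q := by
    apply Polynomial.eq_of_infinite_eval_eq
    apply Set.infinite_of_injective_forall_mem (f := fun t : ℝ => ((t : ℝ) : ℂ))
    case hi => exact fun a b hab => Complex.ofReal_injective hab
    case hf => exact fun t => hagree t
  rw [heq]
  exact hqd
end
end

section
/- Let h_1, …, h_s ∈ ℝ^d be such that the subgroup h_1ℤ + h_2ℤ + ⋯ + h_sℤ is not dense in ℝ^d. Then there exists a continuous function f : ℝ^d → ℝ which satisfies Δ_{h_k} f = 0 for every k = 1, …, s but is not an ordinary polynomial function (in particular, f is not a polynomial and not an exponential polynomial, since it can be chosen non-differentiable). -/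
noncomputable section

open Metric

/-- Translating by an element of a subgroup does not change the distance to the subgroup. -/
lemma infDist_add_mem' {E : Type*} [NormedAddCommGroup E] (S : AddSubgroup E) (a x : E)
    (ha : a ∈ S) : infDist (x + a) (S : Set E) = infDist x (S : Set E) := by
  have hΦ : Isometry (fun y : E => y + a) := (IsometryEquiv.addRight a).isometry
  have himg : (fun y : E => y + a) '' (S : Set E) = S := by
    ext y
    constructor
    · rintro ⟨z, hz, rfl⟩; exact S.add_mem hz ha
    · intro hy; exact ⟨y - a, S.sub_mem hy ha, by simp⟩
  calc infDist (x + a) (S : Set E)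
      = infDist ((fun y => y + a) x) ((fun y : E => y + a) '' S) := by rw [himg]
    _ = infDist x (S : Set E) := infDist_image hΦ

/-- Evaluation of a multivariate polynomial is differentiable. -/
lemma mvpoly_eval_differentiable' {d : ℕ} (P : MvPolynomial (Fin d) ℝ) :
    Differentiable ℝ (fun x : Fin d → ℝ => MvPolynomial.eval x P) := by
  induction P using MvPolynomial.induction_on with
  | C a => simpa using differentiable_const a
  | add p q hp hq => simp only [map_add]; exact hp.add hq
  | mul_X p i hp =>
    simp only [map_mul, MvPolynomial.eval_X]; exact hp.mul ((ContinuousLinearMap.proj i : (Fin d → ℝ) →L[ℝ] ℝ).differentiable)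

/-- **Necessity of the density condition (Remark 2).** If the subgroup
`h 1 ℤ + ⋯ + h s ℤ` is not dense in `ℝ^d`, then there is a continuous, non-differentiable
function `f : ℝ^d → ℝ` with `Δ_{h k} f = 0` for every `k` which is not an ordinary polynomial
function. -/
theorem exists_continuous_nonpolynomial_of_not_dense {d s : ℕ}
    (h : Fin s → (Fin d → ℝ))
    (hnd : closure ((AddSubgroup.closure (Set.range h) : AddSubgroup (Fin d → ℝ)) :
      Set (Fin d → ℝ)) ≠ Set.univ) :
    ∃ f : (Fin d → ℝ) → ℝ, Continuous f ∧ (∀ k : Fin s, fwdDiffOp (h k) f = 0) ∧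
      ¬ Differentiable ℝ f ∧
      ¬ ∃ P : MvPolynomial (Fin d) ℝ, ∀ x : Fin d → ℝ, f x = MvPolynomial.eval x P := by
  set K : AddSubgroup (Fin d → ℝ) := (AddSubgroup.closure (Set.range h)).topologicalClosure
    with hKdef
  have hKset : (K : Set (Fin d → ℝ)) =
      closure ((AddSubgroup.closure (Set.range h) : AddSubgroup (Fin d → ℝ)) :
        Set (Fin d → ℝ)) := rfl
  have hclosed : IsClosed (K : Set (Fin d → ℝ)) :=
    (AddSubgroup.closure (Set.range h)).isClosed_topologicalClosure
  obtain ⟨v, hv⟩ : ∃ v, v ∉ (K : Set (Fin d → ℝ)) := by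
    by_contra hc
    push_neg at hc
    exact hnd (by rw [← hKset]; exact Set.eq_univ_of_forall hc)
  have hne : (K : Set (Fin d → ℝ)).Nonempty := ⟨0, K.zero_mem⟩
  set f : (Fin d → ℝ) → ℝ := fun x => infDist x (K : Set (Fin d → ℝ)) with hfdef
  have hf0 : f 0 = 0 := infDist_zero_of_mem K.zero_mem
  have hfnn : ∀ x, 0 ≤ f x := fun x => infDist_nonneg
  set D : ℝ := infDist v (K : Set (Fin d → ℝ)) with hDdef
  have hD : 0 < D := (hclosed.notMem_iff_infDist_pos hne).1 hv
  -- key lower bound near 0 in the direction of `v`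
  have hkey : ∀ t : ℝ, 0 < t → t ≤ 1 → t * (‖v‖ + D) ≤ D / 2 → D / 2 * t ≤ f (t • v) := by
    intro t ht ht1 htD
    by_contra hc
    push_neg at hc
    rw [hfdef] at hc
    obtain ⟨k, hk, hdk⟩ := (infDist_lt_iff hne).1 hc
    set n : ℕ := ⌊1 / t⌋₊ with hndef
    have h1t : 1 ≤ 1 / t := one_le_one_div ht ht1
    have hfl : |1 / t - (n : ℝ)| ≤ 1 := by
      rw [abs_sub_le_iff]
      constructor
      · have := Nat.lt_floor_add_one (1 / t); linarith [this]
      · have := Nat.floor_le (by linarith : (0:ℝ) ≤ 1 / t); linarith [this]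
    have hnk : (n : ℝ) • k ∈ (K : Set (Fin d → ℝ)) := by
      have := K.nsmul_mem hk n
      rwa [← Nat.cast_smul_eq_nsmul ℝ n k] at this
    have hd1 : dist v ((1 / t) • k) < D / 2 := by
      have he : v - (1 / t) • k = (1 / t) • (t • v - k) := by
        rw [smul_sub, smul_smul]
        field_simp
        rw [one_smul]
      rw [dist_eq_norm, he, norm_smul]
      have hlt : ‖t • v - k‖ < D / 2 * t := by rwa [dist_eq_norm] at hdk
      have h1tpos : 0 < 1 / t := by positivity
      calc ‖(1:ℝ)/t‖ * ‖t • v - k‖ < (1/t) * (D / 2 * t) := by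
            rw [Real.norm_eq_abs, abs_of_pos h1tpos]
            exact mul_lt_mul_of_pos_left hlt h1tpos
        _ = D / 2 := by field_simp
    have hknorm : ‖k‖ ≤ D / 2 := by
      have h1 : ‖k‖ ≤ ‖k - t • v‖ + ‖t • v‖ := by
        calc ‖k‖ = ‖k - t • v + t • v‖ := by rw [sub_add_cancel]
          _ ≤ ‖k - t • v‖ + ‖t • v‖ := norm_add_le _ _
      have h2 : ‖k - t • v‖ < D / 2 * t := by
        rw [← norm_neg, neg_sub]; rwa [dist_eq_norm] at hdk
      have h3 : ‖t • v‖ = t * ‖v‖ := by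
        rw [norm_smul, Real.norm_eq_abs, abs_of_pos ht]
      nlinarith [norm_nonneg v]
    have hd2 : dist ((1 / t) • k) ((n : ℝ) • k) ≤ D / 2 := by
      rw [dist_eq_norm, ← sub_smul, norm_smul, Real.norm_eq_abs]
      calc |1/t - (n:ℝ)| * ‖k‖ ≤ 1 * ‖k‖ :=
            mul_le_mul_of_nonneg_right hfl (norm_nonneg k)
        _ = ‖k‖ := one_mul _
        _ ≤ D / 2 := hknorm
    have hDle : D ≤ dist v ((n : ℝ) • k) := infDist_le_dist_of_mem hnk
    have htri : dist v ((n : ℝ) • k) ≤ dist v ((1/t) • k) + dist ((1/t) • k) ((n:ℝ) • k) :=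
      dist_triangle _ _ _
    linarith
  have hndiff : ¬ Differentiable ℝ f := by
    intro hf
    set g : ℝ → ℝ := fun t => f (t • v) with hgdef
    have hg : Differentiable ℝ g := hf.comp (differentiable_id.smul_const v)
    have hg0 : g 0 = 0 := by simp [hgdef, hf0]
    have hmin : IsLocalMin g 0 := Filter.Eventually.of_forall fun t => by
      rw [hg0]; exact hfnn _
    have hderiv : deriv g 0 = 0 := hmin.deriv_eq_zero
    have hhas : HasDerivAt g 0 0 := by
      have := (hg 0).hasDerivAt
      rwa [hderiv] at this
    have hslope := hasDerivAt_iff_tendsto_slope.1 hhas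
    have hslope' : Filter.Tendsto (slope g 0) (nhdsWithin 0 (Set.Ioi 0)) (nhds 0) :=
      hslope.mono_left (nhdsWithin_mono 0 (fun x hx => ne_of_gt hx))
    set t₀ : ℝ := min 1 (D / 2 / (‖v‖ + D)) with ht₀def
    have hvD : 0 < ‖v‖ + D := by positivity
    have ht₀ : 0 < t₀ := lt_min one_pos (by positivity)
    have hev : ∀ᶠ t in nhdsWithin 0 (Set.Ioi 0), D / 2 ≤ slope g 0 t := by
      filter_upwards [Ioo_mem_nhdsGT_of_mem (Set.left_mem_Ico.2 ht₀)] with t ht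
      obtain ⟨ht1, ht2⟩ := ht
      have h1 : t ≤ 1 := le_of_lt (lt_of_lt_of_le ht2 (min_le_left _ _))
      have h2 : t * (‖v‖ + D) ≤ D / 2 := by
        have hle : t ≤ D / 2 / (‖v‖ + D) := le_of_lt (lt_of_lt_of_le ht2 (min_le_right _ _))
        calc t * (‖v‖ + D) ≤ (D / 2 / (‖v‖ + D)) * (‖v‖ + D) :=
              mul_le_mul_of_nonneg_right hle (le_of_lt hvD)
          _ = D / 2 := by field_simp
      have hlow := hkey t ht1 h1 h2
      rw [slope_def_field, hg0, sub_zero, sub_zero]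
      exact (le_div_iff₀ ht1).2 hlow
    have hcontr : D / 2 ≤ 0 := ge_of_tendsto hslope' hev
    linarith
  refine ⟨f, continuous_infDist_pt _, ?_, hndiff, ?_⟩
  · intro k
    funext x
    have hk : h k ∈ K :=
      (AddSubgroup.le_topologicalClosure _) (AddSubgroup.subset_closure (Set.mem_range_self k))
    simp only [fwdDiffOp, hfdef, Pi.zero_apply]
    rw [infDist_add_mem' K (h k) x hk, sub_self]
  · rintro ⟨P, hP⟩
    exact hndiff (by rw [funext hP]; exact mvpoly_eval_differentiable' P)
end
end
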